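/- Let K ∈ ℝ^{n×n} satisfy K = U_K·D_K·U_Kᵀ with U_K ∈ ℝ^{n×n} orthogonal (U_Kᵀ·U_K = I_n) and D_K the diagonal matrix with diagonal entries d_K : [n] → ℝ, and let V ∈ ℝ^{r×r} satisfy V = U_V·D_V·U_Vᵀ with U_V ∈ ℝ^{r×r} orthogonal and D_V the diagonal matrix with diagonal entries d_V : [r] → ℝ. Let γ, λ, ρ ∈ ℝ be such that γ·d_V(j)·d_K(i)² + λ·d_K(i) + ρ ≠ 0 for all i ∈ [n], j ∈ [r]. Given X ∈ ℝ^{n×r}, define D ∈ ℝ^{n×r} by D(i,j) = (γ·d_V(j)·d_K(i)² + λ·d_K(i) + ρ)⁻¹ and set Y = U_K·((U_Kᵀ·X·U_V) ⊙ D)·U_Vᵀ. Then (γ·(V ⊗ K·K) + λ·(I_r ⊗ K) + ρ·I_{rn})·vec(Y) = vec(X). -/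

import Mathlib

open Matrix
open scoped Kronecker

lemma kron_mulVec {n r : ℕ} (A : Matrix (Fin r) (Fin r) ℝ)
    (B : Matrix (Fin n) (Fin n) ℝ) (W : Matrix (Fin n) (Fin r) ℝ) :
    (A ⊗ₖ B).mulVec (fun p : Fin r × Fin n => W p.2 p.1)
      = fun p => (B * W * Aᵀ) p.2 p.1 := by
  funext ⟨j, i⟩
  simp only [mulVec, dotProduct, kroneckerMap_apply, Fintype.sum_prod_type,
    Matrix.mul_apply, transpose_apply, Finset.sum_mul, Finset.mul_sum]
  apply Finset.sum_congr rfl; intro l _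
  apply Finset.sum_congr rfl; intro k _
  ring

/-- Column-major vectorization of an `n × r` matrix, indexed by pairs `(j, i)`
with `vec W (j, i) = W i j`. -/
def vecCM {n r : ℕ} (W : Matrix (Fin n) (Fin r) ℝ) : Fin r × Fin n → ℝ :=
  fun p => W p.2 p.1

/-- the decoupled formula applies the inverse of the preconditioner:
`Y = U_K ((U_Kᵀ X U_V) ⊙ D) U_Vᵀ` with `D(i,j) = (γ d_V(j) d_K(i)² + λ d_K(i) + ρ)⁻¹`
satisfies `(γ (V ⊗ K²) + λ (I_r ⊗ K) + ρ I) vec(Y) = vec(X)`. -/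
theorem stmt_16 (n r : ℕ) (K UK : Matrix (Fin n) (Fin n) ℝ) (dK : Fin n → ℝ)
    (hUK : UKᵀ * UK = 1) (hK : K = UK * Matrix.diagonal dK * UKᵀ)
    (V UV : Matrix (Fin r) (Fin r) ℝ) (dV : Fin r → ℝ)
    (hUV : UVᵀ * UV = 1) (hV : V = UV * Matrix.diagonal dV * UVᵀ)
    (γ lam ρ : ℝ)
    (hpos : ∀ (i : Fin n) (j : Fin r), γ * dV j * dK i ^ 2 + lam * dK i + ρ ≠ 0)
    (X : Matrix (Fin n) (Fin r) ℝ)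
    (D : Matrix (Fin n) (Fin r) ℝ)
    (hD : ∀ i j, D i j = (γ * dV j * dK i ^ 2 + lam * dK i + ρ)⁻¹)
    (Y : Matrix (Fin n) (Fin r) ℝ)
    (hY : Y = UK * (Matrix.hadamard (UKᵀ * X * UV) D) * UVᵀ) :
    (γ • (V ⊗ₖ (K * K)) + lam • ((1 : Matrix (Fin r) (Fin r) ℝ) ⊗ₖ K) +
        ρ • (1 : Matrix (Fin r × Fin n) (Fin r × Fin n) ℝ)).mulVec (vecCM Y) =
      vecCM X := by
  have hUK' : UK * UKᵀ = 1 := mul_eq_one_comm.mp hUK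
  have hUV' : UV * UVᵀ = 1 := mul_eq_one_comm.mp hUV
  have cK : ∀ {m : Type} [Fintype m], ∀ Z : Matrix (Fin n) m ℝ,
      UKᵀ * (UK * Z) = Z := fun Z => by
    rw [← Matrix.mul_assoc, hUK, Matrix.one_mul]
  have cV2 : ∀ {m : Type} [Fintype m], ∀ Z : Matrix (Fin r) m ℝ,
      UVᵀ * (UV * Z) = Z := fun Z => by
    rw [← Matrix.mul_assoc, hUV, Matrix.one_mul]
  set E := UKᵀ * X * UV with hE
  set H := Matrix.hadamard E D with hH
  have hVt : Vᵀ = UV * Matrix.diagonal dV * UVᵀ := by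
    rw [hV, transpose_mul, transpose_mul, transpose_transpose, diagonal_transpose,
      Matrix.mul_assoc]
  have key : γ • (K * K * Y * Vᵀ) + lam • (K * Y) + ρ • Y = X := by
    have h1 : K * K * Y * Vᵀ
        = UK * (Matrix.diagonal dK * (Matrix.diagonal dK * (H * Matrix.diagonal dV))) * UVᵀ := by
      rw [hY, hK, hVt]
      simp only [Matrix.mul_assoc]
      rw [cK, cK, cV2]
    have h2 : K * Y = UK * (Matrix.diagonal dK * H) * UVᵀ := by
      rw [hY, hK]
      simp only [Matrix.mul_assoc]
      rw [cK]
    have h3 : γ • (K * K * Y * Vᵀ) + lam • (K * Y) + ρ • Y = UK * E * UVᵀ := by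
      rw [h1, h2, hY]
      have hdist : γ • (UK * (Matrix.diagonal dK * (Matrix.diagonal dK * (H * Matrix.diagonal dV))) * UVᵀ)
          + lam • (UK * (Matrix.diagonal dK * H) * UVᵀ) + ρ • (UK * H * UVᵀ)
          = UK * (γ • (Matrix.diagonal dK * (Matrix.diagonal dK * (H * Matrix.diagonal dV)))
              + lam • (Matrix.diagonal dK * H) + ρ • H) * UVᵀ := by
        simp only [Matrix.mul_add, Matrix.add_mul, Matrix.mul_smul, Matrix.smul_mul]
      rw [hdist]
      congr 2
      ext i j
      simp only [Matrix.add_apply, Matrix.smul_apply, diagonal_mul, mul_diagonal,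
        smul_eq_mul, hH, Matrix.hadamard_apply, hD i j]
      have h := hpos i j
      field_simp
      have h' : dK i * lam + dK i ^ 2 * γ * dV j + ρ ≠ 0 := by convert h using 1; ring
      linear_combination (E i j) * (mul_inv_cancel₀ h')
    rw [h3, hE, ← Matrix.mul_assoc, ← Matrix.mul_assoc, hUK', Matrix.one_mul,
      Matrix.mul_assoc, hUV', Matrix.mul_one]
  have lin : ∀ p, (γ • (V ⊗ₖ (K * K)) + lam • ((1 : Matrix (Fin r) (Fin r) ℝ) ⊗ₖ K) +
        ρ • (1 : Matrix (Fin r × Fin n) (Fin r × Fin n) ℝ)).mulVec (vecCM Y) p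
      = (γ • (K * K * Y * Vᵀ) + lam • (K * Y) + ρ • Y) p.2 p.1 := by
    intro p
    have e1 : (V ⊗ₖ (K * K)).mulVec (vecCM Y) p = (K * K * Y * Vᵀ) p.2 p.1 :=
      congrFun (kron_mulVec V (K * K) Y) p
    have e2 : ((1 : Matrix (Fin r) (Fin r) ℝ) ⊗ₖ K).mulVec (vecCM Y) p = (K * Y) p.2 p.1 := by
      have h := congrFun (kron_mulVec (1 : Matrix (Fin r) (Fin r) ℝ) K Y) p
      rwa [transpose_one, Matrix.mul_one] at h
    simp only [add_mulVec, smul_mulVec, one_mulVec, Pi.add_apply, Pi.smul_apply,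
      smul_eq_mul, Matrix.add_apply, Matrix.smul_apply]
    rw [e1, e2]
    rfl
  funext p
  rw [lin p, key]
  rfl
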